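/- arXiv:1409.1631 — 4 statements merged into one kernel-verified Lean document; each statement's English description precedes it below -/
import Mathlib

section
/- Let {X_n} be a sequence of complex-valued random variables on a common probability space, and let F_n denote the distribution function of |X_n|. Suppose there exist N ∈ ℕ, a real number a > 1, and a decreasing function f : [a,∞) → [0,1] such that ∫_a^∞ f(x)/x dx < ∞ and 1 − F_n(x) ≤ f(x) for all x ∈ [a,∞) and all n ≥ N. Then limsup_{n→∞} |X_n|^{1/n} ≤ 1 almost surely. -/
open MeasureTheory Filter
open scoped ENNReal

lemma aux_summable_geom {a c : ℝ} (ha : 0 < a) (hc : 1 < c) {f : ℝ → ℝ}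
    (hf_anti : AntitoneOn f (Set.Ici a)) (hf_nonneg : ∀ x ∈ Set.Ici a, 0 ≤ f x)
    (hf_int : IntegrableOn (fun x => f x / x) (Set.Ici a))
    {m : ℕ} (hm : a ≤ c ^ m) :
    Summable (fun k : ℕ => f (c ^ (m + k + 1))) := by
  have hc0 : (0 : ℝ) < c := lt_trans one_pos hc
  have hta : ∀ k, a ≤ c ^ (m + k) := fun k =>
    le_trans hm (pow_le_pow_right₀ hc.le (Nat.le_add_right m k))
  have ht0 : ∀ k, (0 : ℝ) < c ^ (m + k) := fun k => lt_of_lt_of_le ha (hta k)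
  have htmono : ∀ k, c ^ (m + k) ≤ c ^ (m + (k + 1)) := fun k =>
    pow_le_pow_right₀ hc.le (by omega)
  have hlogc : (0 : ℝ) < Real.log c := Real.log_pos hc
  have hint : ∀ k, IntervalIntegrable (fun x => f x / x) volume
      (c ^ (m + k)) (c ^ (m + (k + 1))) := by
    intro k
    rw [intervalIntegrable_iff_integrableOn_Ioc_of_le (htmono k)]
    exact hf_int.mono_set (fun x hx => le_trans (hta k) hx.1.le)
  have hlb : ∀ k, f (c ^ (m + (k + 1))) * Real.log c
      ≤ ∫ x in (c ^ (m + k))..(c ^ (m + (k + 1))), f x / x := by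
    intro k
    have h0 : (0 : ℝ) ∉ Set.uIcc (c ^ (m + k)) (c ^ (m + (k + 1))) := by
      rw [Set.uIcc_of_le (htmono k)]
      rintro ⟨h1, -⟩
      exact absurd h1 (not_le.2 (ht0 k))
    have hconst : IntervalIntegrable (fun x => f (c ^ (m + (k + 1))) * (1 / x)) volume
        (c ^ (m + k)) (c ^ (m + (k + 1))) :=
      (intervalIntegral.intervalIntegrable_one_div
        (f := fun x => x) (fun x hx => by rintro rfl; exact h0 hx)
        continuousOn_id).const_mul _
    have heq : (∫ x in (c ^ (m + k))..(c ^ (m + (k + 1))), f (c ^ (m + (k + 1))) * (1 / x))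
        = f (c ^ (m + (k + 1))) * Real.log c := by
      rw [intervalIntegral.integral_const_mul, integral_one_div h0]
      congr 1
      rw [show m + (k + 1) = (m + k) + 1 by ring, pow_succ,
        mul_div_cancel_left₀ _ (ne_of_gt (ht0 k))]
    rw [← heq]
    apply intervalIntegral.integral_mono_on (htmono k) hconst (hint k)
    intro x hx
    have hx0 : 0 < x := lt_of_lt_of_le (ht0 k) hx.1
    have hfx : f (c ^ (m + (k + 1))) ≤ f x :=
      hf_anti (le_trans (hta k) hx.1) (hta (k + 1)) hx.2
    rw [mul_one_div, div_le_div_iff_of_pos_right hx0]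
    exact hfx
  have hub : ∀ K : ℕ, (∫ x in (c ^ (m + 0))..(c ^ (m + K)), f x / x)
      ≤ ∫ x in Set.Ici a, f x / x := by
    intro K
    have hle : c ^ (m + 0) ≤ c ^ (m + K) := pow_le_pow_right₀ hc.le (by omega)
    rw [intervalIntegral.integral_of_le hle]
    apply setIntegral_mono_set hf_int
    · filter_upwards [self_mem_ae_restrict (measurableSet_Ici : MeasurableSet (Set.Ici a))]
        with x hx
      exact div_nonneg (hf_nonneg x hx) (le_trans ha.le hx)
    · exact HasSubset.Subset.eventuallyLE (fun x hx => le_trans (hta 0) hx.1.le)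
  have hsum : Summable (fun k : ℕ => f (c ^ (m + (k + 1))) * Real.log c) := by
    apply summable_of_sum_range_le (c := ∫ x in Set.Ici a, f x / x)
    · intro k
      exact mul_nonneg (hf_nonneg _ (hta (k + 1))) hlogc.le
    · intro K
      calc ∑ k ∈ Finset.range K, f (c ^ (m + (k + 1))) * Real.log c
          ≤ ∑ k ∈ Finset.range K, ∫ x in (c ^ (m + k))..(c ^ (m + (k + 1))), f x / x :=
            Finset.sum_le_sum (fun k _ => hlb k)
        _ = ∫ x in (c ^ (m + 0))..(c ^ (m + K)), f x / x :=
            intervalIntegral.sum_integral_adjacent_intervals (fun k _ => hint k)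
        _ ≤ _ := hub K
  have h2 := hsum.mul_right (Real.log c)⁻¹
  apply Summable.congr h2
  intro k
  rw [mul_assoc, mul_inv_cancel₀ (ne_of_gt hlogc), mul_one]
  rw [← Nat.add_assoc]

/-- If the distribution functions `Fₙ(x) = μ {|Xₙ| ≤ x}` of the moduli of a
sequence of complex random variables satisfy the uniform tail bound
`1 - Fₙ(x) ≤ f(x)` on `[a, ∞)` for all `n ≥ N`, where `f : [a,∞) → [0,1]` is decreasing with
`∫_a^∞ f(x)/x dx < ∞`, then `limsup_{n→∞} |Xₙ|^{1/n} ≤ 1` almost surely. -/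
theorem limsup_abs_rpow_le_one
    {Ω : Type*} [MeasurableSpace Ω] (μ : Measure Ω) [IsProbabilityMeasure μ]
    (X : ℕ → Ω → ℂ) (hX : ∀ n, Measurable (X n))
    (N : ℕ) (a : ℝ) (ha : 1 < a) (f : ℝ → ℝ)
    (hf_anti : AntitoneOn f (Set.Ici a))
    (hf_mem : ∀ x ∈ Set.Ici a, f x ∈ Set.Icc (0 : ℝ) 1)
    (hf_int : IntegrableOn (fun x => f x / x) (Set.Ici a))
    (htail : ∀ n, N ≤ n → ∀ x ∈ Set.Ici a,
      1 - (μ {ω | ‖X n ω‖ ≤ x}).toReal ≤ f x) :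
    ∀ᵐ ω ∂μ,
      limsup (fun n : ℕ => ‖X n ω‖ ^ (1 / (n : ℝ))) atTop ≤ 1 := by
  have key : ∀ c : ℝ, 1 < c → ∀ᵐ ω ∂μ,
      limsup (fun n : ℕ => ‖X n ω‖ ^ (1 / (n : ℝ))) atTop ≤ c := by
    intro c hc
    have hc0 : (0 : ℝ) < c := lt_trans one_pos hc
    obtain ⟨m0, hm0⟩ := pow_unbounded_of_one_lt a hc
    set m : ℕ := max N m0 with hmdef
    have hm : a ≤ c ^ m := le_trans hm0.le (pow_le_pow_right₀ hc.le (le_max_right _ _))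
    set M : ℕ := m + 1 with hMdef
    set A : ℕ → Set Ω := fun n => {ω | c ^ n < ‖X n ω‖} with hA
    have habsmeas : ∀ n, Measurable (fun ω => ‖X n ω‖) := fun n =>
      (hX n).norm
    have hSmeas : ∀ n, MeasurableSet {ω | ‖X n ω‖ ≤ c ^ n} := fun n =>
      measurableSet_le (habsmeas n) measurable_const
    have hcompl : ∀ n, A n = {ω | ‖X n ω‖ ≤ c ^ n}ᶜ := by
      intro n; ext ω; simp [hA, not_le]
    have hbound : ∀ n, M ≤ n → μ (A n) ≤ ENNReal.ofReal (f (c ^ n)) := by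
      intro n hn
      have hcn : a ≤ c ^ n := le_trans hm (pow_le_pow_right₀ hc.le (by omega))
      have hN : N ≤ n := le_trans (le_max_left N m0) (by omega)
      have htr : (μ (A n)).toReal ≤ f (c ^ n) := by
        rw [hcompl n, measure_compl (hSmeas n) (measure_ne_top μ _),
          ENNReal.toReal_sub_of_le (measure_mono (Set.subset_univ _)) (measure_ne_top μ _),
          measure_univ, ENNReal.toReal_one]
        exact htail n hN (c ^ n) hcn
      calc μ (A n) = ENNReal.ofReal ((μ (A n)).toReal) :=
            (ENNReal.ofReal_toReal (measure_ne_top μ _)).symm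
        _ ≤ ENNReal.ofReal (f (c ^ n)) := ENNReal.ofReal_le_ofReal htr
    set g : ℕ → ℝ := fun n => if n < M then 1 else f (c ^ n) with hg
    have hg_nonneg : ∀ n, 0 ≤ g n := by
      intro n
      rw [hg]
      by_cases h : n < M
      · simp [h]
      · simp only [h, if_false]
        exact (hf_mem _ (le_trans hm (pow_le_pow_right₀ hc.le (by omega)))).1
    have hg_summable : Summable g := by
      rw [← summable_nat_add_iff M]
      apply Summable.congr (aux_summable_geom (lt_trans one_pos ha) hc hf_anti
        (fun x hx => (hf_mem x hx).1) hf_int hm)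
      intro k
      rw [hg]
      have h1 : ¬ (k + M < M) := by omega
      simp only [h1, if_false]
      congr 2
      omega
    have hsum : (∑' n, μ (A n)) ≠ ∞ := by
      apply ne_top_of_le_ne_top (b := ∑' n, ENNReal.ofReal (g n))
      · rw [← ENNReal.ofReal_tsum_of_nonneg hg_nonneg hg_summable]
        exact ENNReal.ofReal_ne_top
      · apply ENNReal.tsum_le_tsum
        intro n
        rw [hg]
        by_cases h : n < M
        · simp only [h, if_true, ENNReal.ofReal_one]
          exact prob_le_one
        · simp only [h, if_false]
          exact hbound n (by omega)
    filter_upwards [ae_eventually_notMem hsum] with ω hω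
    have hev : ∀ᶠ n : ℕ in atTop, ‖X n ω‖ ^ (1 / (n : ℝ)) ≤ c := by
      filter_upwards [hω, eventually_ge_atTop 1] with n hn hn1
      have hle : ‖X n ω‖ ≤ c ^ n := by
        by_contra h
        exact hn (by simpa [hA] using not_le.1 h)
      have hn0 : (n : ℝ) ≠ 0 := Nat.cast_ne_zero.2 (by omega)
      calc ‖X n ω‖ ^ (1 / (n : ℝ))
          ≤ (c ^ n) ^ (1 / (n : ℝ)) :=
            Real.rpow_le_rpow (norm_nonneg _) hle (by positivity)
        _ = c := by
            rw [← Real.rpow_natCast c n, ← Real.rpow_mul hc0.le,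
              mul_one_div, div_self hn0, Real.rpow_one]
    exact limsup_le_of_le (isCoboundedUnder_le_of_le atTop
      (fun n => Real.rpow_nonneg (norm_nonneg _) _)) hev
  have key' : ∀ᵐ ω ∂μ, ∀ k : ℕ,
      limsup (fun n : ℕ => ‖X n ω‖ ^ (1 / (n : ℝ))) atTop
        ≤ 1 + 1 / ((k : ℝ) + 1) := by
    rw [ae_all_iff]
    intro k
    have hk1 : (0:ℝ) < 1 / ((k : ℝ) + 1) := by positivity
    exact key (1 + 1 / ((k : ℝ) + 1)) (by linarith)
  filter_upwards [key'] with ω hω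
  by_contra h
  push_neg at h
  obtain ⟨k, hk⟩ := exists_nat_one_div_lt (sub_pos.2 h)
  have := hω k
  linarith
end

section
/- Let {X_n} be a sequence of complex-valued random variables on a common probability space, and let F_n denote the distribution function of |X_n|. Suppose there exist N ∈ ℕ, a real number a > 1, and a decreasing function f : [a,∞) → [0,1] such that ∫_a^∞ f(x)/x dx < ∞ and 1 − F_n(x) ≤ f(x) for all x ∈ [a,∞) and all n ≥ N; and suppose there exist N' ∈ ℕ, a real number b with 0 < b < 1, and an increasing function g : [0,b] → [0,1] such that ∫_0^b g(x)/x dx < ∞ and F_n(x) ≤ g(x) for all x ∈ [0,b] and all n ≥ N'. Then lim_{n→∞} |X_n|^{1/n} = 1 almost surely. -/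
open MeasureTheory Filter


lemma summable_of_integral_bound (φ : ℝ → ℝ) (r : ℕ → ℝ) (L C : ℝ) (hL : 0 < L)
    (v : ℕ → ℝ) (hv0 : ∀ n, 0 ≤ v n)
    (hint : ∀ n, IntervalIntegrable φ volume (r n) (r (n+1)))
    (hbound : ∀ n, v n * L ≤ ∫ x in (r n)..(r (n+1)), φ x)
    (hC : ∀ K, (∫ x in (r 0)..(r K), φ x) ≤ C) :
    Summable v := by
  apply summable_of_sum_range_le hv0 (c := C / L)
  intro K
  rw [le_div_iff₀ hL, Finset.sum_mul]
  calc ∑ i ∈ Finset.range K, v i * L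
      ≤ ∑ i ∈ Finset.range K, ∫ x in (r i)..(r (i+1)), φ x :=
        Finset.sum_le_sum fun i _ => hbound i
    _ = ∫ x in (r 0)..(r K), φ x :=
        intervalIntegral.sum_integral_adjacent_intervals fun i _ => hint i
    _ ≤ C := hC K

lemma summable_f_aux (f : ℝ → ℝ) (a c : ℝ) (ha : 0 < a) (hc : 1 < c)
    (hf_anti : AntitoneOn f (Set.Ici a))
    (hf0 : ∀ x ∈ Set.Ici a, 0 ≤ f x)
    (hf_int : IntegrableOn (fun x => f x / x) (Set.Ici a)) :
    Summable (fun n => f (c ^ n)) := by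
  obtain ⟨M, hM⟩ : ∃ M : ℕ, a ≤ c ^ M := by
    obtain ⟨M, hM⟩ := pow_unbounded_of_one_lt a hc
    exact ⟨M, hM.le⟩
  have hc0 : 0 < c := lt_trans one_pos hc
  have hpow : ∀ k : ℕ, M ≤ k → a ≤ c ^ k := fun k hk =>
    hM.trans (pow_le_pow_right₀ hc.le hk)
  have hpow0 : ∀ k : ℕ, (0:ℝ) < c ^ k := fun k => pow_pos hc0 k
  have hmono : ∀ k l : ℕ, k ≤ l → c ^ k ≤ c ^ l := fun k l h => pow_le_pow_right₀ hc.le h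
  -- suffices shifted
  rw [← summable_nat_add_iff (M + 1)]
  have hL : 0 < Real.log c := Real.log_pos hc
  set φ : ℝ → ℝ := fun x => f x / x with hφ
  have hφnn : ∀ x ∈ Set.Ici a, 0 ≤ φ x := fun x hx =>
    div_nonneg (hf0 x hx) (le_trans ha.le hx)
  have hintI : ∀ p q : ℝ, a ≤ p → p ≤ q → IntervalIntegrable φ volume p q := by
    intro p q hap hpq
    apply IntegrableOn.intervalIntegrable
    rw [Set.uIcc_of_le hpq]
    exact hf_int.mono_set (fun x hx => le_trans hap hx.1)
  apply summable_of_integral_bound φ (fun n => c ^ (M + n)) (Real.log c)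
    (∫ x in Set.Ici a, φ x) hL
  · intro n
    exact hf0 _ (hpow _ (by omega))
  · intro n
    have : M + n + 1 = M + (n+1) := by ring
    rw [← this]
    exact hintI _ _ (hpow _ (by omega)) (hmono _ _ (by omega))
  · intro n
    set p := c ^ (M + n)
    set q := c ^ (M + n + 1)
    have hap : a ≤ p := hpow _ (by omega)
    have hpq : p ≤ q := hmono _ _ (by omega)
    have hp0 : 0 < p := hpow0 _
    have h1 : (fun x => f q / x) = fun x => f q * (1 / x) := by
      funext x; ring
    have key : ∫ x in p..q, f q / x = f q * Real.log c := by
      rw [h1, intervalIntegral.integral_const_mul, integral_one_div]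
      · congr 1
        have : q / p = c := by
          simp only [p, q, pow_succ]
          field_simp
        rw [this]
      · intro hx
        rw [Set.uIcc_of_le hpq] at hx
        exact absurd hx.1 (not_le.2 hp0)
    rw [show n + (M + 1) = M + n + 1 by ring, ← key]
    apply intervalIntegral.integral_mono_on hpq
    · exact (continuousOn_const.div continuousOn_id fun x hx =>
        ne_of_gt (lt_of_lt_of_le hp0 (by rw [Set.uIcc_of_le hpq] at hx; exact hx.1))).intervalIntegrable
    · exact hintI p q hap hpq
    · intro x hx
      have hax : a ≤ x := le_trans hap hx.1
      have hx0 : 0 < x := lt_of_lt_of_le ha hax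
      have : f q ≤ f x := hf_anti hax (le_trans hap hpq) hx.2
      show f q / x ≤ f x / x
      gcongr
  · intro K
    have h0K : c ^ (M + 0) ≤ c ^ (M + K) := hmono _ _ (by omega)
    rw [intervalIntegral.integral_of_le h0K]
    apply setIntegral_mono_set hf_int
    · exact (ae_restrict_iff' measurableSet_Ici).2 (Filter.Eventually.of_forall hφnn)
    · exact Filter.Eventually.of_forall fun x hx => le_trans (hpow _ (by omega)) hx.1.le

lemma summable_g_aux (g : ℝ → ℝ) (b c : ℝ) (hb : 0 < b) (hc : 1 < c)
    (hg_mono : MonotoneOn g (Set.Icc 0 b))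
    (hg0 : ∀ x ∈ Set.Icc 0 b, 0 ≤ g x)
    (hg_int : IntegrableOn (fun x => g x / x) (Set.Ioc 0 b)) :
    Summable (fun n => g (c⁻¹ ^ n)) := by
  have hc0 : 0 < c := lt_trans one_pos hc
  set d : ℝ := c⁻¹ with hd
  have hd0 : 0 < d := inv_pos.2 hc0
  have hd1 : d < 1 := inv_lt_one_of_one_lt₀ hc
  obtain ⟨M, hM⟩ : ∃ M : ℕ, d ^ M ≤ b := by
    obtain ⟨M, hM⟩ := exists_pow_lt_of_lt_one hb hd1
    exact ⟨M, hM.le⟩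
  have hpow0 : ∀ k : ℕ, (0:ℝ) < d ^ k := fun k => pow_pos hd0 k
  have hanti : ∀ k l : ℕ, k ≤ l → d ^ l ≤ d ^ k := fun k l h =>
    pow_le_pow_of_le_one hd0.le hd1.le h
  have hmem : ∀ k : ℕ, M ≤ k → d ^ k ∈ Set.Ioc (0:ℝ) b := fun k hk =>
    ⟨hpow0 k, le_trans (hanti _ _ hk) hM⟩
  rw [← summable_nat_add_iff (M + 1)]
  have hL : 0 < Real.log c := Real.log_pos hc
  set ψ : ℝ → ℝ := fun x => g x / x with hψ
  have hψnn : ∀ x ∈ Set.Ioc (0:ℝ) b, 0 ≤ ψ x := fun x hx =>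
    div_nonneg (hg0 x ⟨hx.1.le, hx.2⟩) hx.1.le
  have hintI : ∀ p q : ℝ, 0 < p → p ≤ q → q ≤ b → IntervalIntegrable ψ volume p q := by
    intro p q hp hpq hqb
    apply IntegrableOn.intervalIntegrable
    rw [Set.uIcc_of_le hpq]
    exact hg_int.mono_set (fun x hx => ⟨lt_of_lt_of_le hp hx.1, le_trans hx.2 hqb⟩)
  apply summable_of_integral_bound (fun x => -(ψ x)) (fun n => d ^ (M + n)) (Real.log c)
    (∫ x in Set.Ioc (0:ℝ) b, ψ x) hL
  · intro n
    exact hg0 _ (Set.mem_Icc_of_Ioc (hmem _ (by omega)))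
  · intro n
    apply IntervalIntegrable.neg
    exact ((hintI _ _ (hpow0 _) (hanti _ _ (by omega)) (hmem _ (by omega)).2).symm)
  · intro n
    set p := d ^ (M + n + 1)
    set q := d ^ (M + n)
    have hpq : p ≤ q := hanti _ _ (by omega)
    have hp0 : 0 < p := hpow0 _
    have hqb : q ≤ b := (hmem _ (by omega)).2
    rw [show M + (n+1) = M + n + 1 from by ring]
    rw [show ∫ x in d ^ (M+n)..d ^ (M+n+1), -(ψ x) = ∫ x in p..q, ψ x by
      rw [intervalIntegral.integral_neg, ← intervalIntegral.integral_symm]]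
    have key : ∫ x in p..q, g p / x = g p * Real.log c := by
      rw [show (fun x => g p / x) = fun x => g p * (1 / x) by funext x; ring,
        intervalIntegral.integral_const_mul, integral_one_div]
      · congr 1
        have : q / p = c := by
          simp only [p, q, pow_succ, hd]
          field_simp
        rw [this]
      · intro hx
        rw [Set.uIcc_of_le hpq] at hx
        exact absurd hx.1 (not_le.2 hp0)
    rw [show n + (M + 1) = M + n + 1 by ring, ← key]
    apply intervalIntegral.integral_mono_on hpq
    · exact (continuousOn_const.div continuousOn_id fun x hx =>
        ne_of_gt (lt_of_lt_of_le hp0 (by rw [Set.uIcc_of_le hpq] at hx; exact hx.1))).intervalIntegrable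
    · exact hintI p q hp0 hpq hqb
    · intro x hx
      have hx0 : 0 < x := lt_of_lt_of_le hp0 hx.1
      have : g p ≤ g x := hg_mono ⟨hp0.le, le_trans hpq hqb⟩ ⟨hx0.le, le_trans hx.2 hqb⟩ hx.1
      show g p / x ≤ g x / x
      gcongr
  · intro K
    have h0K : d ^ (M + K) ≤ d ^ (M + 0) := hanti _ _ (by omega)
    rw [show ∫ x in d ^ (M+0)..d ^ (M+K), -(ψ x) = ∫ x in d ^ (M+K)..d ^ (M+0), ψ x by
      rw [intervalIntegral.integral_neg, ← intervalIntegral.integral_symm]]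
    rw [intervalIntegral.integral_of_le h0K]
    apply setIntegral_mono_set hg_int
    · exact (ae_restrict_iff' measurableSet_Ioc).2 (Filter.Eventually.of_forall hψnn)
    · exact Filter.Eventually.of_forall fun x hx =>
        ⟨lt_of_lt_of_le (hpow0 _) hx.1.le, le_trans hx.2 (le_trans (hanti _ _ (by omega)) hM)⟩

lemma bc_aux {Ω : Type*} [MeasurableSpace Ω] (μ : Measure Ω) [IsProbabilityMeasure μ]
    (s : ℕ → Set Ω) (v : ℕ → ℝ) (hv : Summable v) (M : ℕ)
    (h : ∀ n, M ≤ n → (μ (s n)).toReal ≤ v n) :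
    ∀ᵐ ω ∂μ, ∀ᶠ n in atTop, ω ∉ s n := by
  apply ae_eventually_notMem
  have hfin : ∀ n, μ (s n) ≠ ⊤ := fun n => measure_ne_top μ _
  have key : ∑' n, μ (s (n + M)) ≠ ⊤ := by
    have hvnn : ∀ n, 0 ≤ v (n + M) := fun n =>
      le_trans ENNReal.toReal_nonneg (h (n + M) (by omega))
    have hsum : Summable (fun n => v (n + M)) := (summable_nat_add_iff M).2 hv
    have : ∑' n, μ (s (n + M)) ≤ ∑' n, ENNReal.ofReal (v (n + M)) := by
      apply ENNReal.tsum_le_tsum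
      intro n
      rw [← ENNReal.ofReal_toReal (hfin (n + M))]
      exact ENNReal.ofReal_le_ofReal (h (n + M) (by omega))
    rw [← ENNReal.ofReal_tsum_of_nonneg hvnn hsum] at this
    exact ne_top_of_le_ne_top ENNReal.ofReal_ne_top this
  rw [← Summable.sum_add_tsum_nat_add' (f := fun n => μ (s n)) (k := M) ENNReal.summable]
  exact ENNReal.add_ne_top.2 ⟨(ENNReal.sum_lt_top.2 fun i _ => (hfin i).lt_top).ne, key⟩

lemma tendsto_of_sandwich (u : ℕ → ℝ) (hu0 : ∀ n, 0 ≤ u n)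
    (h : ∀ k : ℕ, ∀ᶠ n in atTop,
      u n ≤ (1 + ((k:ℝ)+1)⁻¹) ^ n ∧ ((1 + ((k:ℝ)+1)⁻¹)⁻¹) ^ n < u n) :
    Tendsto (fun n => u n ^ (1/(n:ℝ))) atTop (nhds 1) := by
  rw [Metric.tendsto_atTop]
  intro ε hε
  obtain ⟨k, hk⟩ := exists_nat_gt (1/ε)
  have hδ : ((k:ℝ)+1)⁻¹ < ε := by
    rw [inv_lt_comm₀ (by positivity) hε] at *
    · exact lt_trans (by rw [one_div] at hk; exact hk) (by linarith)
  set δ : ℝ := ((k:ℝ)+1)⁻¹ with hδdef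
  have hδ0 : 0 < δ := by positivity
  set c : ℝ := 1 + δ with hcdef
  have hc1 : 1 < c := by simp [hcdef]; positivity
  have hc0 : 0 < c := lt_trans one_pos hc1
  obtain ⟨Nk, hNk⟩ := (h k).exists_forall_of_atTop
  refine ⟨max Nk 1, fun n hn => ?_⟩
  have hn1 : 1 ≤ n := le_trans (le_max_right _ _) hn
  have hnn : (0:ℝ) < n := by exact_mod_cast hn1
  obtain ⟨hub, hlb⟩ := hNk n (le_trans (le_max_left _ _) hn)
  have hinv : (0:ℝ) ≤ 1/(n:ℝ) := by positivity
  have hup : u n ^ (1/(n:ℝ)) ≤ c := by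
    calc u n ^ (1/(n:ℝ)) ≤ (c ^ n) ^ (1/(n:ℝ)) :=
          Real.rpow_le_rpow (hu0 n) hub hinv
      _ = c := by
          rw [← Real.rpow_natCast c n, ← Real.rpow_mul hc0.le,
            mul_one_div_cancel (ne_of_gt hnn), Real.rpow_one]
  have hlo : c⁻¹ ≤ u n ^ (1/(n:ℝ)) := by
    calc c⁻¹ = ((c⁻¹ ^ n)) ^ (1/(n:ℝ)) := by
          rw [← Real.rpow_natCast c⁻¹ n, ← Real.rpow_mul (by positivity),
            mul_one_div_cancel (ne_of_gt hnn), Real.rpow_one]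
      _ ≤ u n ^ (1/(n:ℝ)) := Real.rpow_le_rpow (by positivity) hlb.le hinv
  rw [Real.dist_eq, abs_sub_lt_iff]
  constructor
  · calc u n ^ (1/(n:ℝ)) - 1 ≤ c - 1 := by linarith
      _ = δ := by simp [hcdef]
      _ < ε := hδ
  · have : 1 - c⁻¹ ≤ δ := by
      have h1 : c⁻¹ = 1/c := (one_div c).symm
      rw [h1]
      rw [sub_le_iff_le_add, ← sub_le_iff_le_add', le_div_iff₀ hc0]
      nlinarith
    linarith


/-- Under both the tail bound (Assumption 1: `1 - Fₙ(x) ≤ f(x)` on `[a,∞)` for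
`n ≥ N`, `f` decreasing on `[a,∞)` with values in `[0,1]` and `∫_a^∞ f(x)/x dx < ∞`) and the
bound near zero (Assumption 2: `Fₙ(x) ≤ g(x)` on `[0,b]` for `n ≥ N'`, `g` increasing on `[0,b]`
with values in `[0,1]` and `∫_0^b g(x)/x dx < ∞`), one has `lim_{n→∞} |Xₙ|^{1/n} = 1`
almost surely. -/
theorem tendsto_abs_rpow_one
    {Ω : Type*} [MeasurableSpace Ω] (μ : Measure Ω) [IsProbabilityMeasure μ]
    (X : ℕ → Ω → ℂ) (hX : ∀ n, Measurable (X n))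
    (N : ℕ) (a : ℝ) (ha : 1 < a) (f : ℝ → ℝ)
    (hf_anti : AntitoneOn f (Set.Ici a))
    (hf_mem : ∀ x ∈ Set.Ici a, f x ∈ Set.Icc (0 : ℝ) 1)
    (hf_int : IntegrableOn (fun x => f x / x) (Set.Ici a))
    (htail : ∀ n, N ≤ n → ∀ x ∈ Set.Ici a,
      1 - (μ {ω | ‖X n ω‖ ≤ x}).toReal ≤ f x)
    (N' : ℕ) (b : ℝ) (hb0 : 0 < b) (hb1 : b < 1) (g : ℝ → ℝ)
    (hg_mono : MonotoneOn g (Set.Icc 0 b))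
    (hg_mem : ∀ x ∈ Set.Icc 0 b, g x ∈ Set.Icc (0 : ℝ) 1)
    (hg_int : IntegrableOn (fun x => g x / x) (Set.Ioc 0 b))
    (hsmall : ∀ n, N' ≤ n → ∀ x ∈ Set.Icc 0 b,
      (μ {ω | ‖X n ω‖ ≤ x}).toReal ≤ g x) :
    ∀ᵐ ω ∂μ,
      Tendsto (fun n : ℕ => ‖X n ω‖ ^ (1 / (n : ℝ))) atTop (nhds 1) := by
  have ha0 : 0 < a := lt_trans one_pos ha
  -- per-k almost sure statements
  have key : ∀ k : ℕ, ∀ᵐ ω ∂μ,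
      (∀ᶠ n in atTop, ω ∉ {ω | (1 + ((k:ℝ)+1)⁻¹) ^ n < ‖X n ω‖}) ∧
      (∀ᶠ n in atTop, ω ∉ {ω | ‖X n ω‖ ≤ ((1 + ((k:ℝ)+1)⁻¹)⁻¹) ^ n}) := by
    intro k
    set c : ℝ := 1 + ((k:ℝ)+1)⁻¹ with hcdef
    have hc1 : 1 < c := by simp only [hcdef, lt_add_iff_pos_right]; positivity
    have hc0 : 0 < c := lt_trans one_pos hc1
    have hcinv1 : c⁻¹ < 1 := inv_lt_one_of_one_lt₀ hc1
    have hcinv0 : 0 < c⁻¹ := inv_pos.2 hc0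
    refine Filter.Eventually.and ?_ ?_
    · -- upper Borel–Cantelli
      obtain ⟨M, hM⟩ : ∃ M : ℕ, a ≤ c ^ M := by
        obtain ⟨M, hM⟩ := pow_unbounded_of_one_lt a hc1
        exact ⟨M, hM.le⟩
      apply bc_aux μ _ (fun n => f (c ^ n))
        (summable_f_aux f a c ha0 hc1 hf_anti (fun x hx => (hf_mem x hx).1) hf_int)
        (max N M)
      intro n hn
      have hmemIci : c ^ n ∈ Set.Ici a :=
        le_trans hM (pow_le_pow_right₀ hc1.le (le_trans (le_max_right N M) hn))
      have hs : MeasurableSet {ω | ‖X n ω‖ ≤ c ^ n} :=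
        measurableSet_le (continuous_norm.measurable.comp (hX n)) measurable_const
      have hcompl : {ω | c ^ n < ‖X n ω‖} =
          {ω | ‖X n ω‖ ≤ c ^ n}ᶜ := by
        ext ω; simp [not_le]
      rw [hcompl, prob_compl_eq_one_sub hs,
        ENNReal.toReal_sub_of_le prob_le_one ENNReal.one_ne_top, ENNReal.toReal_one]
      exact htail n (le_trans (le_max_left N M) hn) _ hmemIci
    · -- lower Borel–Cantelli
      obtain ⟨M, hM⟩ : ∃ M : ℕ, c⁻¹ ^ M ≤ b := by
        obtain ⟨M, hM⟩ := exists_pow_lt_of_lt_one hb0 hcinv1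
        exact ⟨M, hM.le⟩
      apply bc_aux μ _ (fun n => g (c⁻¹ ^ n))
        (summable_g_aux g b c hb0 hc1 hg_mono (fun x hx => (hg_mem x hx).1) hg_int)
        (max N' M)
      intro n hn
      have hmemIcc : c⁻¹ ^ n ∈ Set.Icc (0:ℝ) b :=
        ⟨by positivity, le_trans
          (pow_le_pow_of_le_one hcinv0.le hcinv1.le (le_trans (le_max_right N' M) hn)) hM⟩
      exact hsmall n (le_trans (le_max_left N' M) hn) _ hmemIcc
  have hae : ∀ᵐ ω ∂μ, ∀ k : ℕ,
      (∀ᶠ n in atTop, ω ∉ {ω | (1 + ((k:ℝ)+1)⁻¹) ^ n < ‖X n ω‖}) ∧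
      (∀ᶠ n in atTop, ω ∉ {ω | ‖X n ω‖ ≤ ((1 + ((k:ℝ)+1)⁻¹)⁻¹) ^ n}) :=
    ae_all_iff.2 key
  filter_upwards [hae] with ω hω
  apply tendsto_of_sandwich _ (fun n => norm_nonneg _)
  intro k
  refine ((hω k).1.and (hω k).2).mono fun n hn => ⟨?_, ?_⟩
  · exact not_lt.1 hn.1
  · exact not_le.1 hn.2
end

section
/- Let A_{k,n}, 0 ≤ k ≤ n, n ∈ ℕ, be a triangular array of complex-valued random variables on a common probability space, and let F_{k,n} denote the distribution function of |A_{k,n}|. Suppose Assumption 1* holds: there is N ∈ ℕ such that the random variables |A_{0,n}|, …, |A_{n,n}| are jointly independent for each n ≥ N, and there exist a > 1 and a function f : [a,∞) → [0,1] such that f(x)·log x is decreasing, ∫_a^∞ f(x)·(log x)/x dx < ∞, and 1 − F_{k,n}(x) ≤ f(x) for all x ∈ [a,∞), all 0 ≤ k ≤ n, and all n ≥ N. Suppose also Assumption 2* holds: there exist N' ∈ ℕ, 0 < b < 1, and an increasing function g : [0,b] → [0,1] such that ∫_0^b g(x)/x dx < ∞ and F_{k,n}(x) ≤ g(x) for all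 x ∈ [0,b], all 0 ≤ k ≤ n, and all n ≥ N'. Then lim_{n→∞} max_{0≤k≤n} |A_{k,n}|^{1/n} = 1 almost surely. -/
open MeasureTheory Filter
open scoped ENNReal


lemma summable_upper {a c : ℝ} (ha : 1 < a) (hc : 1 < c) {f : ℝ → ℝ}
    (hf_mem : ∀ x ∈ Set.Ici a, f x ∈ Set.Icc (0:ℝ) 1)
    (hf_anti : AntitoneOn (fun x => f x * Real.log x) (Set.Ici a))
    (hf_int : IntegrableOn (fun x => f x * Real.log x / x) (Set.Ici a)) :
    Summable (fun n : ℕ => ((n : ℝ) + 1) * f (c ^ n)) := by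
  set F : ℝ → ℝ := fun x => f x * Real.log x with hF
  obtain ⟨n0', hn0'⟩ := pow_unbounded_of_one_lt a hc
  set n0 : ℕ := n0' + 1 with hn0def
  have hc0 : (0:ℝ) < c := lt_trans one_pos hc
  have hpow : ∀ n, n0 ≤ n → a ≤ c ^ n := by
    intro n hn
    have h1 : c ^ n0' ≤ c ^ n := pow_le_pow_right₀ hc.le (by omega)
    linarith
  have hpow_pos : ∀ n : ℕ, (0:ℝ) < c ^ n := fun n => pow_pos hc0 n
  have hlogc : 0 < Real.log c := Real.log_pos hc
  have hF_nonneg : ∀ x ∈ Set.Ici a, 0 ≤ F x := by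
    intro x hx
    exact mul_nonneg (hf_mem x hx).1 (Real.log_nonneg (by simp only [Set.mem_Ici] at hx; linarith))
  have hint : ∀ u v : ℝ, a ≤ u → a ≤ v → IntervalIntegrable (fun x => F x / x) volume u v := by
    intro u v hu hv
    rw [intervalIntegrable_iff]
    exact hf_int.mono_set (fun x hx => ((le_min hu hv).trans hx.1.le))
  set I : ℝ := ∫ x in Set.Ici a, F x / x with hI
  have hkey : ∀ m : ℕ, n0 ≤ m →
      F (c ^ (m+1)) * Real.log c ≤ ∫ x in (c ^ m)..(c ^ (m+1)), F x / x := by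
    intro m hm
    have huv : c ^ m ≤ c ^ (m+1) := pow_le_pow_right₀ hc.le (Nat.le_succ m)
    have hau : a ≤ c ^ m := hpow m hm
    have hav : a ≤ c ^ (m+1) := hpow (m+1) (by omega)
    have heq : ∫ x in (c ^ m)..(c ^ (m+1)), F (c ^ (m+1)) * x⁻¹
        = F (c ^ (m+1)) * Real.log c := by
      rw [intervalIntegral.integral_const_mul, integral_inv_of_pos (hpow_pos m) (hpow_pos (m+1))]
      congr 1
      rw [pow_succ, mul_comm (c ^ m) c, mul_div_assoc, div_self (ne_of_gt (hpow_pos m)), mul_one]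
    rw [← heq]
    apply intervalIntegral.integral_mono_on huv _ (hint _ _ hau hav)
    · intro x hx
      have hax : a ≤ x := hau.trans hx.1
      have hx0 : 0 < x := by linarith
      have hFle : F (c ^ (m+1)) ≤ F x := hf_anti (Set.mem_Ici.2 hax) (Set.mem_Ici.2 hav) hx.2
      rw [div_eq_mul_inv]
      exact mul_le_mul_of_nonneg_right hFle (inv_nonneg.2 hx0.le)
    · exact (intervalIntegrable_const (c := F (c ^ (m+1)))).mul_continuousOn
        (ContinuousOn.inv₀ continuousOn_id (fun x hx => by
          have hax : a ≤ x := le_trans (le_min hau hav) hx.1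
          intro h; rw [h] at hax; linarith))
  have hI0 : ∀ M : ℕ, ∑ i ∈ Finset.range M, F (c ^ (n0 + i + 1)) * Real.log c ≤ I := by
    intro M
    have htel : ∑ i ∈ Finset.range M, ∫ x in (c ^ (n0 + i))..(c ^ (n0 + i + 1)), F x / x
        = ∫ x in (c ^ (n0 + 0))..(c ^ (n0 + M)), F x / x := by
      apply intervalIntegral.sum_integral_adjacent_intervals (fun k hk => ?_)
      exact hint _ _ (hpow _ (by omega)) (hpow _ (by omega))
    have hsumle : ∑ i ∈ Finset.range M, F (c ^ (n0 + i + 1)) * Real.log c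
        ≤ ∑ i ∈ Finset.range M, ∫ x in (c ^ (n0 + i))..(c ^ (n0 + i + 1)), F x / x :=
      Finset.sum_le_sum (fun i _ => hkey (n0 + i) (by omega))
    refine hsumle.trans ?_
    rw [htel]
    have hle : c ^ (n0 + 0) ≤ c ^ (n0 + M) := pow_le_pow_right₀ hc.le (by omega)
    rw [intervalIntegral.integral_of_le hle]
    refine setIntegral_mono_set hf_int ?_ ?_
    · refine (ae_restrict_iff' measurableSet_Ici).2 (ae_of_all _ fun x hx => ?_)
      have hax : a ≤ x := hx
      exact div_nonneg (hF_nonneg x hx) (by linarith)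
    · have hsub : Set.Ioc (c ^ (n0+0)) (c ^ (n0+M)) ⊆ Set.Ici a :=
        fun x hx => (hpow n0 le_rfl).trans hx.1.le
      exact hsub.eventuallyLE
  have S1 : Summable (fun i : ℕ => F (c ^ (n0 + i + 1))) := by
    apply summable_of_sum_range_le (c := I / Real.log c)
      (fun i => hF_nonneg _ (Set.mem_Ici.2 (hpow _ (by omega))))
    intro M
    rw [le_div_iff₀ hlogc, Finset.sum_mul]
    exact hI0 M
  refine (summable_nat_add_iff (n0 + 1)).1 ?_
  apply Summable.of_nonneg_of_le (f := fun i => (2 / Real.log c) * F (c ^ (n0 + i + 1)))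
  · intro i
    have hfn := hf_mem (c ^ (i + (n0+1))) (Set.mem_Ici.2 (hpow _ (by omega)))
    exact mul_nonneg (by positivity) hfn.1
  · intro i
    have hexp : i + (n0 + 1) = n0 + i + 1 := by omega
    rw [hexp]
    set n : ℕ := n0 + i + 1 with hndef
    have hfn := hf_mem (c ^ n) (Set.mem_Ici.2 (hpow _ (by omega)))
    have hFn : F (c ^ n) = f (c ^ n) * ((n : ℝ) * Real.log c) := by
      simp only [hF]
      rw [Real.log_pow]
    rw [hFn]
    have hn1 : (1:ℝ) ≤ (n : ℝ) := by exact_mod_cast Nat.one_le_iff_ne_zero.2 (by omega)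
    have hrhs : (2 / Real.log c) * (f (c ^ n) * ((n:ℝ) * Real.log c))
        = 2 * (n:ℝ) * f (c ^ n) := by field_simp
    rw [hrhs]
    nlinarith [hfn.1]
  · exact S1.mul_left _


lemma g_small {b : ℝ} (hb0 : 0 < b) (hb1 : b < 1) {g : ℝ → ℝ}
    (hg_mono : MonotoneOn g (Set.Icc 0 b))
    (hg_mem : ∀ x ∈ Set.Icc 0 b, g x ∈ Set.Icc (0:ℝ) 1)
    (hg_int : IntegrableOn (fun x => g x / x) (Set.Ioc 0 b))
    {c : ℝ} (hc0 : 0 < c) (hc1 : c < 1) :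
    ∀ᶠ n : ℕ in atTop, c ^ n ≤ b ∧ g (c ^ n) ≤ 1/2 := by
  set I : ℝ := ∫ x in Set.Ioc 0 b, g x / x with hIdef
  have hI0 : 0 ≤ I := by
    refine setIntegral_nonneg measurableSet_Ioc (fun x hx => ?_)
    exact div_nonneg (hg_mem x ⟨hx.1.le, hx.2⟩).1 hx.1.le
  have hkey : ∀ x : ℝ, 0 < x → x ≤ b → g x * (Real.log b - Real.log x) ≤ I := by
    intro x hx0 hxb
    have hx_mem : x ∈ Set.Icc (0:ℝ) b := ⟨hx0.le, hxb⟩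
    have h1 : ∫ t in x..b, g x * t⁻¹ = g x * (Real.log b - Real.log x) := by
      rw [intervalIntegral.integral_const_mul, integral_inv_of_pos hx0 hb0,
        Real.log_div (ne_of_gt hb0) (ne_of_gt hx0)]
    have hint2 : IntervalIntegrable (fun t => g t / t) volume x b := by
      rw [intervalIntegrable_iff]
      exact hg_int.mono_set (fun t ht => ⟨(lt_min hx0 hb0).trans ht.1, ht.2.trans (max_le hxb le_rfl)⟩)
    have hint1 : IntervalIntegrable (fun t => g x * t⁻¹) volume x b := by
      apply IntervalIntegrable.const_mul
      apply intervalIntegral.intervalIntegrable_inv (f := fun t : ℝ => t) _ continuousOn_id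
      intro t ht
      have : min x b ≤ t := ht.1
      have hmin : 0 < min x b := lt_min hx0 hb0
      intro h
      have ht0 : t = 0 := h
      rw [ht0] at this; linarith
    have h2 : ∫ t in x..b, g x * t⁻¹ ≤ ∫ t in x..b, g t / t := by
      apply intervalIntegral.integral_mono_on hxb hint1 hint2
      intro t ht
      have ht0 : 0 < t := lt_of_lt_of_le hx0 ht.1
      have hgle : g x ≤ g t := hg_mono hx_mem ⟨ht0.le, ht.2⟩ ht.1
      rw [div_eq_mul_inv]
      exact mul_le_mul_of_nonneg_right hgle (inv_nonneg.2 ht0.le)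
    have h3 : ∫ t in x..b, g t / t ≤ I := by
      rw [intervalIntegral.integral_of_le hxb]
      refine setIntegral_mono_set hg_int ?_ ?_
      · refine (ae_restrict_iff' measurableSet_Ioc).2 (ae_of_all _ fun t ht => ?_)
        exact div_nonneg (hg_mem t ⟨ht.1.le, ht.2⟩).1 ht.1.le
      · exact (Set.Ioc_subset_Ioc_left hx0.le).eventuallyLE
    linarith [h1 ▸ h2]
  have hlogc : Real.log c < 0 := Real.log_neg hc0 hc1
  obtain ⟨n1, hn1⟩ := exists_nat_ge ((2 * I + 1 - Real.log b) / (-Real.log c))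
  have hsmall : ∀ᶠ n : ℕ in atTop, c ^ n ≤ b :=
    (tendsto_pow_atTop_nhds_zero_of_lt_one hc0.le hc1).eventually (eventually_le_nhds hb0)
  filter_upwards [hsmall, eventually_ge_atTop n1] with n hnb hn
  refine ⟨hnb, ?_⟩
  have hcn0 : (0:ℝ) < c ^ n := pow_pos hc0 n
  have hD : 2 * I + 1 ≤ Real.log b - Real.log (c ^ n) := by
    rw [Real.log_pow]
    have h1 : ((2 * I + 1 - Real.log b) / (-Real.log c)) ≤ (n : ℝ) :=
      hn1.trans (by exact_mod_cast hn)
    have h2 : (n : ℝ) * (-Real.log c) ≥ 2 * I + 1 - Real.log b := by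
      rw [ge_iff_le, ← div_le_iff₀ (by linarith : (0:ℝ) < -Real.log c)]
      exact h1
    nlinarith
  have hg0 : 0 ≤ g (c ^ n) := (hg_mem _ ⟨hcn0.le, hnb⟩).1
  have hk := hkey (c ^ n) hcn0 hnb
  nlinarith

/-- Lemma 4.3, limit (4.13). Let `A k n` (for `0 ≤ k ≤ n`) be a triangular
array of complex random variables, `A n k` denoting `A_{k,n}`, with distribution functions
`F_{k,n}(x) = μ {|A_{k,n}| ≤ x}`. Assume Assumption 1*: for all `n ≥ N` the moduli
`|A_{0,n}|, …, |A_{n,n}|` are jointly independent, and there are `a > 1` and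
`f : [a,∞) → [0,1]` such that `x ↦ f(x) log x` is decreasing on `[a,∞)`,
`∫_a^∞ f(x) log x / x dx < ∞`, and `1 - F_{k,n}(x) ≤ f(x)` for `x ≥ a`, `0 ≤ k ≤ n`, `n ≥ N`.
Assume Assumption 2*: there are `N'`, `0 < b < 1` and an increasing `g : [0,b] → [0,1]` with
`∫_0^b g(x)/x dx < ∞` and `F_{k,n}(x) ≤ g(x)` for `x ∈ [0,b]`, `0 ≤ k ≤ n`, `n ≥ N'`.
Then `lim_{n→∞} max_{0≤k≤n} |A_{k,n}|^{1/n} = 1` almost surely. -/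
theorem tendsto_max_abs_rpow_one_triangular
    {Ω : Type*} [MeasurableSpace Ω] (μ : Measure Ω) [IsProbabilityMeasure μ]
    (A : ℕ → ℕ → Ω → ℂ) (hA : ∀ n k, Measurable (A n k))
    (N : ℕ)
    (hindep : ∀ n, N ≤ n →
      ProbabilityTheory.iIndepFun (m := fun _ : Fin (n + 1) => (inferInstance : MeasurableSpace ℝ))
        (fun k ω => ‖A n k ω‖) μ)
    (a : ℝ) (ha : 1 < a) (f : ℝ → ℝ)
    (hf_mem : ∀ x ∈ Set.Ici a, f x ∈ Set.Icc (0 : ℝ) 1)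
    (hf_anti : AntitoneOn (fun x => f x * Real.log x) (Set.Ici a))
    (hf_int : IntegrableOn (fun x => f x * Real.log x / x) (Set.Ici a))
    (htail : ∀ n, N ≤ n → ∀ k ≤ n, ∀ x ∈ Set.Ici a,
      1 - (μ {ω | ‖A n k ω‖ ≤ x}).toReal ≤ f x)
    (N' : ℕ) (b : ℝ) (hb0 : 0 < b) (hb1 : b < 1) (g : ℝ → ℝ)
    (hg_mono : MonotoneOn g (Set.Icc 0 b))
    (hg_mem : ∀ x ∈ Set.Icc 0 b, g x ∈ Set.Icc (0 : ℝ) 1)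
    (hg_int : IntegrableOn (fun x => g x / x) (Set.Ioc 0 b))
    (hsmall : ∀ n, N' ≤ n → ∀ k ≤ n, ∀ x ∈ Set.Icc 0 b,
      (μ {ω | ‖A n k ω‖ ≤ x}).toReal ≤ g x) :
    ∀ᵐ ω ∂μ,
      Tendsto
        (fun n : ℕ =>
          ((Finset.range (n + 1)).sup' Finset.nonempty_range_add_one
              fun k => ‖A n k ω‖) ^ (1 / (n : ℝ)))
        atTop (nhds 1) := by
  have habs : ∀ n k, Measurable fun ω => ‖A n k ω‖ :=
    fun n k => continuous_norm.measurable.comp (hA n k)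
  have hmeasle : ∀ n k (x : ℝ), MeasurableSet {ω | ‖A n k ω‖ ≤ x} :=
    fun n k x => (habs n k) measurableSet_Iic
  -- Upper a.s. bound
  have hUpper : ∀ c : ℝ, 1 < c → ∀ᵐ ω ∂μ, ∀ᶠ n in atTop, ∀ k ≤ n,
      ‖A n k ω‖ ≤ c ^ n := by
    intro c hc
    obtain ⟨n0', hn0'⟩ := pow_unbounded_of_one_lt a hc
    set n2 : ℕ := max N (n0' + 1) with hn2
    have hpow : ∀ n, n2 ≤ n → a ≤ c ^ n := by
      intro n hn
      have h1 : c ^ n0' ≤ c ^ n := pow_le_pow_right₀ hc.le (by omega)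
      linarith
    set s : ℕ → Set Ω :=
      fun n => ⋃ k ∈ Finset.range (n+1), {ω | c ^ n < ‖A n k ω‖} with hsdef
    have hsb : ∀ n, n2 ≤ n → μ (s n) ≤ ENNReal.ofReal (((n:ℝ)+1) * f (c ^ n)) := by
      intro n hn
      have hca : a ≤ c ^ n := hpow n hn
      have hf0 : 0 ≤ f (c ^ n) := (hf_mem _ hca).1
      calc μ (s n) ≤ ∑ k ∈ Finset.range (n+1), μ {ω | c ^ n < ‖A n k ω‖} :=
            measure_biUnion_finset_le _ _
        _ ≤ ∑ _k ∈ Finset.range (n+1), ENNReal.ofReal (f (c ^ n)) := by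
            apply Finset.sum_le_sum
            intro k hk
            have hkn : k ≤ n := Nat.lt_succ_iff.1 (Finset.mem_range.1 hk)
            have hcompl : {ω | c ^ n < ‖A n k ω‖}
                = {ω | ‖A n k ω‖ ≤ c ^ n}ᶜ := by
              ext ω; simp [not_le]
            rw [hcompl, prob_compl_eq_one_sub (hmeasle n k _)]
            have htail' := htail n (le_trans (le_max_left _ _) hn) k hkn (c ^ n) hca
            have h1 : μ {ω | ‖A n k ω‖ ≤ c ^ n} ≤ 1 := prob_le_one
            have hne : (1 : ℝ≥0∞) - μ {ω | ‖A n k ω‖ ≤ c ^ n} ≠ ⊤ :=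
              (tsub_le_self.trans_lt ENNReal.one_lt_top).ne
            rw [← ENNReal.ofReal_toReal hne]
            apply ENNReal.ofReal_le_ofReal
            rw [ENNReal.toReal_sub_of_le h1 ENNReal.one_ne_top, ENNReal.toReal_one]
            exact htail'
        _ ≤ ENNReal.ofReal (((n:ℝ)+1) * f (c ^ n)) := by
            apply le_of_eq
            rw [Finset.sum_const, Finset.card_range, nsmul_eq_mul,
              ENNReal.ofReal_mul (by positivity : (0:ℝ) ≤ (n:ℝ)+1)]
            congr 1
            have hcast : ((n:ℝ)+1) = ((n+1 : ℕ) : ℝ) := by push_cast; ring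
            rw [hcast, ENNReal.ofReal_natCast]
    have hsum : (∑' n, μ (s n)) ≠ ⊤ := by
      set w : ℕ → ℝ := fun n => if n < n2 then 1 else ((n:ℝ)+1) * f (c ^ n) with hw
      have hw0 : ∀ n, 0 ≤ w n := by
        intro n
        by_cases h : n < n2
        · simp [hw, h]
        · simp only [hw, if_neg h]
          exact mul_nonneg (by positivity) (hf_mem _ (hpow n (not_lt.1 h))).1
      have hwS : Summable w := by
        refine (summable_nat_add_iff n2).1 ?_
        refine Summable.congr ((summable_nat_add_iff n2).2
          (summable_upper ha hc hf_mem hf_anti hf_int)) (fun i => ?_)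
        simp [hw, Nat.not_lt.2 (Nat.le_add_left n2 i)]
      have hble : ∀ n, μ (s n) ≤ ENNReal.ofReal (w n) := by
        intro n
        by_cases h : n < n2
        · simp only [hw, if_pos h, ENNReal.ofReal_one]; exact prob_le_one
        · simpa [hw, if_neg h] using hsb n (not_lt.1 h)
      have : (∑' n, μ (s n)) ≤ ENNReal.ofReal (∑' n, w n) := by
        exact (ENNReal.tsum_le_tsum hble).trans
          (le_of_eq (ENNReal.ofReal_tsum_of_nonneg hw0 hwS).symm)
      exact (this.trans_lt ENNReal.ofReal_lt_top).ne
    filter_upwards [ae_eventually_notMem hsum] with ω hω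
    filter_upwards [hω] with n hn k hk
    by_contra hcon
    push_neg at hcon
    exact hn (Set.mem_biUnion (Finset.mem_range.2 (Nat.lt_succ_of_le hk)) hcon)
  -- Lower a.s. bound
  have hLower : ∀ c : ℝ, 0 < c → c < 1 → ∀ᵐ ω ∂μ, ∀ᶠ n in atTop,
      c ^ n < (Finset.range (n+1)).sup' Finset.nonempty_range_add_one
        (fun k => ‖A n k ω‖) := by
    intro c hc0 hc1
    obtain ⟨n1, hn1⟩ := eventually_atTop.1 (g_small hb0 hb1 hg_mono hg_mem hg_int hc0 hc1)
    set n3 : ℕ := max (max N N') n1 with hn3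
    set s : ℕ → Set Ω := fun n => ⋂ i ∈ (Finset.univ : Finset (Fin (n+1))),
      (fun ω => ‖A n i ω‖) ⁻¹' Set.Iic (c ^ n) with hsdef
    have hsb : ∀ n, n3 ≤ n → μ (s n) ≤ ENNReal.ofReal ((1/2 : ℝ) ^ (n+1)) := by
      intro n hn
      obtain ⟨hcb, hg12⟩ := hn1 n (le_trans (le_max_right _ _) hn)
      have hNn : N ≤ n := le_trans (le_trans (le_max_left _ _) (le_max_left _ _)) hn
      have hN'n : N' ≤ n := le_trans (le_trans (le_max_right _ _) (le_max_left _ _)) hn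
      have hprod := (hindep n hNn).measure_inter_preimage_eq_mul
        (sets := fun _ => Set.Iic (c ^ n)) Finset.univ (fun i _ => measurableSet_Iic)
      have hseq : μ (s n) = ∏ i : Fin (n+1),
          μ ((fun ω => ‖A n i ω‖) ⁻¹' Set.Iic (c ^ n)) := hprod
      rw [hseq]
      have hfac : ∀ i : Fin (n+1),
          μ ((fun ω => ‖A n i ω‖) ⁻¹' Set.Iic (c ^ n))
          ≤ ENNReal.ofReal (g (c ^ n)) := by
        intro i
        have hsm := hsmall n hN'n i (Nat.lt_succ_iff.1 i.isLt) (c ^ n)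
          ⟨(pow_pos hc0 n).le, hcb⟩
        rw [← ENNReal.ofReal_toReal (measure_ne_top μ _)]
        exact ENNReal.ofReal_le_ofReal hsm
      calc ∏ i : Fin (n+1), μ ((fun ω => ‖A n i ω‖) ⁻¹' Set.Iic (c ^ n))
          ≤ ∏ _i : Fin (n+1), ENNReal.ofReal (g (c ^ n)) :=
            Finset.prod_le_prod' (fun i _ => hfac i)
        _ = ENNReal.ofReal (g (c ^ n)) ^ (n+1) := by
            rw [Finset.prod_const, Finset.card_univ, Fintype.card_fin]
        _ ≤ ENNReal.ofReal (1/2 : ℝ) ^ (n+1) :=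
            pow_le_pow_left' (ENNReal.ofReal_le_ofReal hg12) _
        _ = ENNReal.ofReal ((1/2 : ℝ) ^ (n+1)) := (ENNReal.ofReal_pow (by norm_num) _).symm
    have hsum : (∑' n, μ (s n)) ≠ ⊤ := by
      set w : ℕ → ℝ := fun n => if n < n3 then 1 else (1/2 : ℝ) ^ (n+1) with hw
      have hw0 : ∀ n, 0 ≤ w n := by
        intro n; by_cases h : n < n3 <;> simp [hw, h] <;> positivity
      have hwS : Summable w := by
        refine (summable_nat_add_iff n3).1 ?_
        have hgeom : Summable (fun n : ℕ => (1/2 : ℝ) ^ (n+1)) :=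
          (summable_nat_add_iff 1).2 (summable_geometric_of_lt_one (by norm_num) (by norm_num))
        refine Summable.congr ((summable_nat_add_iff n3).2 hgeom) (fun i => ?_)
        simp [hw, Nat.not_lt.2 (Nat.le_add_left n3 i)]
      have hble : ∀ n, μ (s n) ≤ ENNReal.ofReal (w n) := by
        intro n
        by_cases h : n < n3
        · simp only [hw, if_pos h, ENNReal.ofReal_one]; exact prob_le_one
        · simpa [hw, if_neg h] using hsb n (not_lt.1 h)
      have : (∑' n, μ (s n)) ≤ ENNReal.ofReal (∑' n, w n) := by
        exact (ENNReal.tsum_le_tsum hble).trans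
          (le_of_eq (ENNReal.ofReal_tsum_of_nonneg hw0 hwS).symm)
      exact (this.trans_lt ENNReal.ofReal_lt_top).ne
    filter_upwards [ae_eventually_notMem hsum] with ω hω
    filter_upwards [hω] with n hn
    simp only [hsdef, Set.mem_iInter, Set.mem_preimage, Set.mem_Iic, not_forall] at hn
    obtain ⟨i, -, hi⟩ := hn
    exact lt_of_lt_of_le (not_le.1 hi)
      (Finset.le_sup' (fun k => ‖A n k ω‖) (Finset.mem_range.2 i.isLt))
  -- combine
  have haeU : ∀ᵐ ω ∂μ, ∀ m : ℕ, ∀ᶠ n in atTop, ∀ k ≤ n,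
      ‖A n k ω‖ ≤ (1 + 1/((m:ℝ)+1)) ^ n :=
    ae_all_iff.2 (fun m => hUpper _ (by
      have h : (0:ℝ) < 1/((m:ℝ)+1) := by positivity
      linarith))
  have haeL : ∀ᵐ ω ∂μ, ∀ m : ℕ, ∀ᶠ n in atTop,
      (1 - 1/((m:ℝ)+2)) ^ n < (Finset.range (n+1)).sup' Finset.nonempty_range_add_one
        (fun k => ‖A n k ω‖) := by
    refine ae_all_iff.2 (fun m => hLower _ ?_ ?_)
    · have : 1/((m:ℝ)+2) < 1 := by
        rw [div_lt_one (by positivity)]; linarith [Nat.cast_nonneg (α := ℝ) m]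
      linarith
    · have : (0:ℝ) < 1/((m:ℝ)+2) := by positivity
      linarith
  filter_upwards [haeU, haeL] with ω hU hL
  have hsup_nonneg : ∀ n : ℕ, 0 ≤ (Finset.range (n+1)).sup' Finset.nonempty_range_add_one
      (fun k => ‖A n k ω‖) := by
    intro n
    exact le_trans (norm_nonneg _)
      (Finset.le_sup' (fun k => ‖A n k ω‖) (Finset.mem_range.2 n.succ_pos))
  rw [tendsto_order]
  constructor
  · intro y hy
    by_cases hy0 : 0 ≤ y
    · obtain ⟨m, hm⟩ := exists_nat_gt (1/(1-y))
      have h1y : 0 < 1 - y := by linarith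
      have hym : y < 1 - 1/((m:ℝ)+2) := by
        have hm0 : (0:ℝ) < (m:ℝ) + 2 := by positivity
        have h1 : 1/(1-y) < (m:ℝ) + 2 := by
          have : (m:ℝ) ≤ (m:ℝ) + 2 := by linarith
          linarith
        have h2 : 1/((m:ℝ)+2) < 1 - y := by
          rw [div_lt_iff₀ hm0]
          rw [div_lt_iff₀ h1y] at h1
          nlinarith
        linarith
      set R : ℝ := 1 - 1/((m:ℝ)+2) with hR
      have hR0 : 0 < R := lt_of_le_of_lt hy0 hym
      filter_upwards [hL m, eventually_ge_atTop 1] with n hn hn1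
      have hn0 : (n:ℝ) ≠ 0 := by exact_mod_cast Nat.one_le_iff_ne_zero.1 hn1
      have hRn : R = (R ^ n) ^ (1/(n:ℝ)) := by
        rw [← Real.rpow_natCast R n, ← Real.rpow_mul hR0.le]
        rw [mul_one_div, div_self hn0, Real.rpow_one]
      calc y < R := hym
        _ = (R ^ n) ^ (1/(n:ℝ)) := hRn
        _ ≤ _ := Real.rpow_le_rpow (pow_nonneg hR0.le n) hn.le (by positivity)
    · push_neg at hy0
      exact Filter.Eventually.of_forall (fun n =>
        lt_of_lt_of_le hy0 (Real.rpow_nonneg (hsup_nonneg n) _))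
  · intro y hy
    obtain ⟨m, hm⟩ := exists_nat_gt (1/(y-1))
    have hy1 : 0 < y - 1 := by linarith
    have hQy : 1 + 1/((m:ℝ)+1) < y := by
      have hm0 : (0:ℝ) < (m:ℝ) + 1 := by positivity
      have h1 : 1/(y-1) < (m:ℝ) + 1 := by
        have : (m:ℝ) ≤ (m:ℝ) + 1 := by linarith
        linarith
      have h2 : 1/((m:ℝ)+1) < y - 1 := by
        rw [div_lt_iff₀ hm0]
        rw [div_lt_iff₀ hy1] at h1
        nlinarith
      linarith
    set Q : ℝ := 1 + 1/((m:ℝ)+1) with hQ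
    have hQ0 : 0 < Q := by
      have : (0:ℝ) < 1/((m:ℝ)+1) := by positivity
      simp only [hQ]; linarith
    filter_upwards [hU m, eventually_ge_atTop 1] with n hn hn1
    have hn0 : (n:ℝ) ≠ 0 := by exact_mod_cast Nat.one_le_iff_ne_zero.1 hn1
    have hsup_le : (Finset.range (n+1)).sup' Finset.nonempty_range_add_one
        (fun k => ‖A n k ω‖) ≤ Q ^ n :=
      Finset.sup'_le _ _ (fun k hk => hn k (Nat.lt_succ_iff.1 (Finset.mem_range.1 hk)))
    have hQn : (Q ^ n) ^ (1/(n:ℝ)) = Q := by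
      rw [← Real.rpow_natCast Q n, ← Real.rpow_mul hQ0.le]
      rw [mul_one_div, div_self hn0, Real.rpow_one]
    calc ((Finset.range (n+1)).sup' Finset.nonempty_range_add_one
          (fun k => ‖A n k ω‖)) ^ (1/(n:ℝ))
        ≤ (Q ^ n) ^ (1/(n:ℝ)) :=
          Real.rpow_le_rpow (hsup_nonneg n) hsup_le (by positivity)
      _ = Q := hQn
      _ < y := hQy
end

section
/- Let Z and W be independent complex-valued random variables on a common probability space and let t > 0. Then E[(log⁻|Z + W|)^t] ≤ sup_{z∈ℂ} E[(log⁻|Z − z|)^t], where both sides are interpreted as integrals of nonnegative (possibly infinite) functions. -/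
open MeasureTheory Filter
open scoped ENNReal

/-- `log⁻ x = max (-log x) 0` for `x ≥ 0`, as an extended nonnegative real, with the convention
`log⁻ 0 = +∞`. -/
noncomputable def logNegE (x : ℝ) : ℝ≥0∞ :=
  if x = 0 then ⊤ else ENNReal.ofReal (-Real.log x)

lemma measurable_logNegE : Measurable logNegE := by
  unfold logNegE
  exact Measurable.ite (measurableSet_eq_fun measurable_id measurable_const)
    measurable_const (ENNReal.measurable_ofReal.comp Real.measurable_log.neg)

/-- If `Z` and `W` are independent complex random variables and `t > 0`, then
`E[(log⁻ |Z + W|)^t] ≤ sup_{z ∈ ℂ} E[(log⁻ |Z - z|)^t]`, both sides being lower integrals of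
nonnegative (possibly infinite) functions. -/
theorem lintegral_logNeg_rpow_add_le_iSup
    {Ω : Type*} [MeasurableSpace Ω] (μ : Measure Ω) [IsProbabilityMeasure μ]
    (Z W : Ω → ℂ) (hZ : Measurable Z) (hW : Measurable W)
    (hindep : ProbabilityTheory.IndepFun Z W μ)
    (t : ℝ) (ht : 0 < t) :
    ∫⁻ ω, logNegE ‖Z ω + W ω‖ ^ t ∂μ
      ≤ ⨆ z : ℂ, ∫⁻ ω, logNegE ‖Z ω - z‖ ^ t ∂μ := by
  set f : ℂ → ℝ≥0∞ := fun x => logNegE ‖x‖ ^ t with hf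
  have hfm : Measurable f := by
    apply Measurable.pow
    · exact measurable_logNegE.comp continuous_norm.measurable
    · exact measurable_const
  set S : ℝ≥0∞ := ⨆ z : ℂ, ∫⁻ ω, f (Z ω - z) ∂μ with hS
  have hmap : μ.map (fun ω => (Z ω, W ω)) = (μ.map Z).prod (μ.map W) :=
    (ProbabilityTheory.indepFun_iff_map_prod_eq_prod_map_map hZ.aemeasurable
      hW.aemeasurable).mp hindep
  have h1 : ∫⁻ ω, f (Z ω + W ω) ∂μ
      = ∫⁻ p : ℂ × ℂ, f (p.1 + p.2) ∂((μ.map Z).prod (μ.map W)) := by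
    rw [← hmap, lintegral_map (f := fun p : ℂ × ℂ => f (p.1 + p.2))
      (hfm.comp measurable_add) (hZ.prodMk hW)]
  have h2 : ∫⁻ p : ℂ × ℂ, f (p.1 + p.2) ∂((μ.map Z).prod (μ.map W))
      = ∫⁻ w, ∫⁻ z, f (z + w) ∂(μ.map Z) ∂(μ.map W) :=
    lintegral_prod_symm _ (hfm.comp measurable_add).aemeasurable
  have h3 : ∀ w : ℂ, ∫⁻ z, f (z + w) ∂(μ.map Z) ≤ S := by
    intro w
    rw [lintegral_map (f := fun z => f (z + w)) (hfm.comp (measurable_add_const w)) hZ]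
    have : (fun ω => f (Z ω + w)) = fun ω => f (Z ω - (-w)) := by
      funext ω; rw [sub_neg_eq_add]
    rw [this]
    exact le_iSup (fun z : ℂ => ∫⁻ ω, f (Z ω - z) ∂μ) (-w)
  calc ∫⁻ ω, f (Z ω + W ω) ∂μ
      = ∫⁻ w, ∫⁻ z, f (z + w) ∂(μ.map Z) ∂(μ.map W) := by rw [h1, h2]
    _ ≤ ∫⁻ _, S ∂(μ.map W) := lintegral_mono h3
    _ = S := by
        have : IsProbabilityMeasure (μ.map W) := Measure.isProbabilityMeasure_map hW.aemeasurable
        simp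
end
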